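/- The representation Ψ: B_3 → GL_3(ℤ[t^{±1}, b^{±1}]) with Ψ(σ_1) = [[0,t,0],[b,0,0],[0,0,1]] and Ψ(σ_2) = [[1,0,0],[0,0,t],[0,b,0]] is not injective. -/

import Mathlib

/-- The braid relations on `m` generators. -/
def braidRels (m : ℕ) : Set (FreeGroup (Fin m)) :=
  { r | (∃ i j : Fin m, (i : ℕ) + 1 = (j : ℕ) ∧
          r = .of i * .of j * .of i * (.of j * .of i * .of j)⁻¹) ∨
        (∃ i j : Fin m, (i : ℕ) + 2 ≤ (j : ℕ) ∧
          r = .of i * .of j * (.of j * .of i)⁻¹) }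

/-- The Artin braid group on `n` strands. -/
abbrev BraidGroup (n : ℕ) : Type := PresentedGroup (braidRels (n - 1))

/-- The Artin generators (0-indexed: `σ i` crosses strands `i+1` and `i+2`). -/
def σ {n : ℕ} (i : Fin (n - 1)) : BraidGroup n := PresentedGroup.of i

/-- `genMat R n a b c d i` : the n×n identity matrix, except with the 2×2 block
`[[a,b],[c,d]]` in (0-indexed) rows/columns `i, i+1`. -/
def genMat (R : Type*) [CommRing R] (n : ℕ) (a b c d : R) (i : ℕ) :
    Matrix (Fin n) (Fin n) R := fun j k =>
  if (j : ℕ) = i ∧ (k : ℕ) = i then a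
  else if (j : ℕ) = i ∧ (k : ℕ) = i + 1 then b
  else if (j : ℕ) = i + 1 ∧ (k : ℕ) = i then c
  else if (j : ℕ) = i + 1 ∧ (k : ℕ) = i + 1 then d
  else if j = k then 1 else 0

/-- The ring of Laurent polynomials in two variables over ℤ. -/
abbrev L2 : Type := LaurentPolynomial (LaurentPolynomial ℤ)

noncomputable def tL : L2 := LaurentPolynomial.T 1
noncomputable def bL : L2 := LaurentPolynomial.C (LaurentPolynomial.T 1)
noncomputable def tLinv : L2 := LaurentPolynomial.T (-1)
noncomputable def bLinv : L2 := LaurentPolynomial.C (LaurentPolynomial.T (-1))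

/-- The image of σ₁ in `SL(2,ℤ)`. -/
def brA : GL (Fin 2) ℤ := ⟨!![1,1;0,1], !![1,-1;0,1],
  by norm_num [Matrix.mul_fin_two, ← Matrix.one_fin_two],
  by norm_num [Matrix.mul_fin_two, ← Matrix.one_fin_two]⟩

/-- The image of σ₂ in `SL(2,ℤ)`. -/
def brB : GL (Fin 2) ℤ := ⟨!![1,0;-1,1], !![1,0;1,1],
  by norm_num [Matrix.mul_fin_two, ← Matrix.one_fin_two],
  by norm_num [Matrix.mul_fin_two, ← Matrix.one_fin_two]⟩

lemma braid_rel_holds : ∀ r ∈ braidRels 2, FreeGroup.lift (![brA, brB]) r = 1 := by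
  rintro r (⟨i, j, hij, rfl⟩ | ⟨i, j, hij, rfl⟩)
  · have hi : i = 0 := by omega
    have hj : j = 1 := by omega
    subst hi; subst hj
    have : brA * brB * brA = brB * brA * brB := by
      apply Units.ext
      show ((brA : Matrix (Fin 2) (Fin 2) ℤ) * (brB : Matrix (Fin 2) (Fin 2) ℤ) * (brA : Matrix (Fin 2) (Fin 2) ℤ)) = (brB : Matrix (Fin 2) (Fin 2) ℤ) * (brA : Matrix (Fin 2) (Fin 2) ℤ) * (brB : Matrix (Fin 2) (Fin 2) ℤ)
      norm_num [brA, brB, Matrix.mul_fin_two]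
    rw [map_mul, map_mul, map_mul, map_inv, map_mul, map_mul]
    simp only [FreeGroup.lift_apply_of, Matrix.cons_val_zero, Matrix.cons_val_one, Matrix.head_cons]
    rw [this, mul_inv_cancel]
  · exfalso; omega

/-- The standard homomorphism `B₃ → SL(2,ℤ)`. -/
def brPhi : BraidGroup 3 →* GL (Fin 2) ℤ := PresentedGroup.toGroup braid_rel_holds

theorem stmt_8 (Ψ : BraidGroup 3 →* GL (Fin 3) L2)
    (h1 : (↑(Ψ (σ ⟨0, by norm_num⟩)) : Matrix (Fin 3) (Fin 3) L2) = !![0, tL, 0; bL, 0, 0; 0, 0, 1])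
    (h2 : (↑(Ψ (σ ⟨1, by norm_num⟩)) : Matrix (Fin 3) (Fin 3) L2) = !![1, 0, 0; 0, 0, tL; 0, bL, 0]) :
    ¬ Function.Injective Ψ := by
  intro hinj
  set s0 : BraidGroup 3 := σ ⟨0, by norm_num⟩ with hs0
  set s1 : BraidGroup 3 := σ ⟨1, by norm_num⟩ with hs1
  have key : Ψ (s0 * s0 * (s1 * s1)) = Ψ (s1 * s1 * (s0 * s0)) := by
    apply Units.ext
    simp only [map_mul, Matrix.GeneralLinearGroup.coe_mul, h1, h2]
    show ((!![0, tL, 0; bL, 0, 0; 0, 0, 1] * !![0, tL, 0; bL, 0, 0; 0, 0, 1]) *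
        (!![1, 0, 0; 0, 0, tL; 0, bL, 0] * !![1, 0, 0; 0, 0, tL; 0, bL, 0]) :
        Matrix (Fin 3) (Fin 3) L2) = _
    norm_num [Matrix.mul_fin_three]
    ring_nf
  have heq := hinj key
  have h2' := congrArg brPhi heq
  have hA : brPhi s0 = brA := by
    rw [hs0]; exact PresentedGroup.toGroup.of braid_rel_holds
  have hB : brPhi s1 = brB := by
    rw [hs1]; exact PresentedGroup.toGroup.of braid_rel_holds
  rw [map_mul, map_mul, map_mul, map_mul, map_mul, map_mul, hA, hB] at h2'
  have : ((brA : Matrix (Fin 2) (Fin 2) ℤ) * (brA : Matrix (Fin 2) (Fin 2) ℤ) *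
        ((brB : Matrix (Fin 2) (Fin 2) ℤ) * (brB : Matrix (Fin 2) (Fin 2) ℤ))) =
      (brB : Matrix (Fin 2) (Fin 2) ℤ) * (brB : Matrix (Fin 2) (Fin 2) ℤ) *
        ((brA : Matrix (Fin 2) (Fin 2) ℤ) * (brA : Matrix (Fin 2) (Fin 2) ℤ)) := by
    simp only [← Matrix.GeneralLinearGroup.coe_mul, h2']
  rw [show (↑brA : Matrix (Fin 2) (Fin 2) ℤ) = !![1,1;0,1] from rfl,
      show (↑brB : Matrix (Fin 2) (Fin 2) ℤ) = !![1,0;-1,1] from rfl] at this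
  norm_num [Matrix.mul_fin_two] at this
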